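/- Let s(t) solve the one-dimensional escort ODE ds/dt = d/ds[ln M_0(s)], s(0) = 0, where M_0(s) = Σ_i p_i^0 e^{s m_i}, p_i^0 > 0, and the m_i are distinct reals. Then the replicator frequencies defined by p_i(t) = p_i^0 e^{m_i s(t)} / Σ_j p_j^0 e^{m_j s(t)} solve the replicator equation dp_i/dt = p_i (m_i E_t[m] − (E_t[m])²), where E_t[m] = Σ_j m_j p_j(t). -/

import Mathlib

/-- Reduction formula: if `s(t)` solves the scalar escort ODE
`s' = (d/ds) ln M₀(s)` with `M₀(s) = Σᵢ pᵢ⁰ e^{s mᵢ}` and `s(0) = 0`, then the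
exponential-family frequencies `pᵢ(t) = pᵢ⁰ e^{mᵢ s(t)}/Σⱼ pⱼ⁰ e^{mⱼ s(t)}`
solve the replicator equation with multiplicative fitness. -/
theorem escort_solution_solves_multiplicative_replicator
    (n : ℕ) (m p0 : Fin n → ℝ) (hp0 : ∀ i, 0 < p0 i) (hsum : ∑ i, p0 i = 1)
    (hm : Function.Injective m)
    (s : ℝ → ℝ) (hs0 : s 0 = 0)
    (hode : ∀ t, HasDerivAt s
      ((∑ i, m i * p0 i * Real.exp (s t * m i)) / (∑ i, p0 i * Real.exp (s t * m i))) t)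
    (p : ℝ → Fin n → ℝ)
    (hp : ∀ t i, p t i = p0 i * Real.exp (m i * s t) / ∑ j, p0 j * Real.exp (m j * s t)) :
    ∀ t i, HasDerivAt (fun τ => p τ i)
      (p t i * (m i * (∑ j, m j * p t j) - (∑ j, m j * p t j) ^ 2)) t := by
  intro t i
  have hne : (Finset.univ : Finset (Fin n)).Nonempty := by
    rcases (Finset.univ : Finset (Fin n)).eq_empty_or_nonempty with h | h
    · rw [h, Finset.sum_empty] at hsum; norm_num at hsum
    · exact h
  have hNpos : ∀ τ, 0 < ∑ j, p0 j * Real.exp (m j * s τ) := fun τ =>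
    Finset.sum_pos (fun j _ => mul_pos (hp0 j) (Real.exp_pos _)) hne
  set N : ℝ := ∑ j, p0 j * Real.exp (m j * s t) with hN
  set A : ℝ := ∑ j, m j * p0 j * Real.exp (m j * s t) with hA
  have hN0 : N ≠ 0 := ne_of_gt (hNpos t)
  have hode' : HasDerivAt s (A / N) t := by
    have h1 : (∑ j, m j * p0 j * Real.exp (s t * m j)) = A := by
      apply Finset.sum_congr rfl; intros j _; rw [mul_comm (s t)]
    have h2 : (∑ j, p0 j * Real.exp (s t * m j)) = N := by
      apply Finset.sum_congr rfl; intros j _; rw [mul_comm (s t)]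
    have := hode t
    rwa [h1, h2] at this
  have hf : HasDerivAt (fun τ => p0 i * Real.exp (m i * s τ))
      (p0 i * (Real.exp (m i * s t) * (m i * (A / N)))) t :=
    (((hode'.const_mul (m i)).exp)).const_mul (p0 i)
  have hg : HasDerivAt (fun τ => ∑ j, p0 j * Real.exp (m j * s τ))
      (∑ j, p0 j * (Real.exp (m j * s t) * (m j * (A / N)))) t :=
    HasDerivAt.fun_sum (fun j _ => (((hode'.const_mul (m j)).exp)).const_mul (p0 j))
  have hdiv := hf.div hg hN0
  have hfun : (fun τ => p τ i)
      = fun τ => p0 i * Real.exp (m i * s τ) / ∑ j, p0 j * Real.exp (m j * s τ) := by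
    funext τ; exact hp τ i
  rw [hfun]
  convert hdiv using 1
  case e'_4 => rfl
  case e'_5 => rfl
  case e'_8 => rfl
  have hE : (∑ j, m j * p t j) = A / N := by
    rw [hA, Finset.sum_div]
    apply Finset.sum_congr rfl
    intro j _
    rw [hp t j]; ring
  have hS : (∑ j, p0 j * (Real.exp (m j * s t) * (m j * (A / N)))) = (A / N) * A := by
    rw [hA, Finset.mul_sum]
    apply Finset.sum_congr rfl
    intro j _; ring
  rw [hE, hS, hp t i]
  rw [← hN]
  field_simp
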